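/- arXiv:2511.15599 — 3 statements merged into one kernel-verified Lean document; each statement's English description precedes it below -/
import Mathlib

section
/- Let β_N, β_D, β_M, β_C, γ_M, γ_C > 0 and let (m_N, m_D, m_M, m_C) : [0,∞) → ℝ⁴ be a differentiable solution of the mean system with strictly positive initial data m_J(0) > 0 for J ∈ {N, D, M, C} and with m_N(0) + m_D(0) = m⁰ > 0. Then for each J ∈ {N, D, M, C} there exist constants 0 < c_J ≤ C_J < ∞ such that c_J ≤ m_J(t) ≤ C_J for all t ≥ 0, and moreover the derivative m_J'(t) is bounded on [0,∞). -/
open Set Real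
set_option maxHeartbeats 4000000

private lemma expComp_lower (f d : ℝ → ℝ) (K c' a b : ℝ) (hab : a ≤ b)
    (hf : ∀ t ∈ Set.Icc a b, HasDerivAt f (d t) t)
    (hd : ∀ t ∈ Set.Icc a b, K * c' - K * f t ≤ d t) :
    (f a - c') * Real.exp (K * a) ≤ (f b - c') * Real.exp (K * b) := by
  set g : ℝ → ℝ := fun t => (f t - c') * Real.exp (K * t) with hg
  have hg' : ∀ t ∈ Set.Icc a b,
      HasDerivAt g ((d t + K * (f t - c')) * Real.exp (K * t)) t := by
    intro t ht
    have h1 : HasDerivAt (fun t => f t - c') (d t) t := (hf t ht).sub_const c'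
    have h2 : HasDerivAt (fun t => Real.exp (K * t)) (K * Real.exp (K * t)) t := by
      exact ((Real.hasDerivAt_exp (K*t)).comp t ((hasDerivAt_id t).const_mul K)).congr_deriv (by ring)
    have := h1.mul h2
    exact this.congr_deriv (by ring)
  have hmono : MonotoneOn g (Set.Icc a b) := by
    apply monotoneOn_of_deriv_nonneg (convex_Icc a b)
      (fun t ht => (hg' t ht).continuousAt.continuousWithinAt)
      (fun t ht => (hg' t (interior_subset ht)).differentiableAt.differentiableWithinAt)
    intro t ht
    rw [interior_Icc] at ht
    rw [(hg' t (Ioo_subset_Icc_self ht)).deriv]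
    nlinarith [hd t (Ioo_subset_Icc_self ht), (Real.exp_pos (K*t)).le]
  exact hmono (left_mem_Icc.mpr hab) (right_mem_Icc.mpr hab) hab

private lemma exp_split (K a b : ℝ) :
    Real.exp (K * a) = Real.exp (K * b) * Real.exp (-(K * (b - a))) := by
  rw [← Real.exp_add]; ring_nf

private lemma mono_of_deriv (f d : ℝ → ℝ) (a b : ℝ) (hab : a ≤ b)
    (hf : ∀ t ∈ Set.Icc a b, HasDerivAt f (d t) t)
    (hd : ∀ t ∈ Set.Icc a b, 0 ≤ d t) : f a ≤ f b := by
  have := expComp_lower f d 0 0 a b hab hf (by intro t ht; simpa using hd t ht)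
  simpa using this

private lemma decay_lower (f d : ℝ → ℝ) (K a b : ℝ) (hab : a ≤ b)
    (hf : ∀ t ∈ Set.Icc a b, HasDerivAt f (d t) t)
    (hd : ∀ t ∈ Set.Icc a b, -(K * f t) ≤ d t) :
    f a * Real.exp (-(K * (b - a))) ≤ f b := by
  have h := expComp_lower f d K 0 a b hab hf (by intro t ht; simpa using hd t ht)
  simp only [sub_zero] at h
  rw [exp_split K a b] at h
  have hE := (Real.exp_pos (K * b))
  have hr := (Real.exp_pos (-(K * (b - a))))
  nlinarith [Real.exp_pos (-(K * (b - a)))]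

private lemma source_lower_min (f d : ℝ → ℝ) (K c a b : ℝ) (hab : a ≤ b) (hK : 0 < K)
    (hf : ∀ t ∈ Set.Icc a b, HasDerivAt f (d t) t)
    (hd : ∀ t ∈ Set.Icc a b, c - K * f t ≤ d t) :
    min (f a) (c / K) ≤ f b := by
  have hc' : K * (c / K) = c := by field_simp
  have h := expComp_lower f d K (c / K) a b hab hf (by intro t ht; rw [hc']; exact hd t ht)
  rw [exp_split K a b] at h
  have hE := Real.exp_pos (K * b)
  have hr := Real.exp_pos (-(K * (b - a)))
  have hr1 : Real.exp (-(K * (b - a))) ≤ 1 := by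
    rw [Real.exp_le_one_iff]; nlinarith
  rcases le_or_gt (c / K) (f a) with hca | hca
  · have h0 : 0 ≤ (f a - c / K) * (Real.exp (K * b) * Real.exp (-(K * (b - a)))) :=
      mul_nonneg (by linarith) (by positivity)
    have h1 : 0 ≤ (f b - c / K) * Real.exp (K * b) := le_trans h0 h
    have : c / K ≤ f b := by nlinarith
    exact le_trans (min_le_right _ _) this
  · have h2 : (f a - c / K) * Real.exp (-(K * (b - a))) ≥ (f a - c / K) := by nlinarith
    have : (f a - c / K) * Real.exp (K * b) ≤ (f b - c / K) * Real.exp (K * b) := by nlinarith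
    have : f a - c / K ≤ f b - c / K := le_of_mul_le_mul_right this hE
    exact le_trans (min_le_left _ _) (by linarith)

private lemma source_lower_abs (f d : ℝ → ℝ) (K c a b : ℝ) (hab : a ≤ b) (hK : 0 < K)
    (hc : 0 ≤ c) (hfa : 0 ≤ f a)
    (hf : ∀ t ∈ Set.Icc a b, HasDerivAt f (d t) t)
    (hd : ∀ t ∈ Set.Icc a b, c - K * f t ≤ d t) :
    c / K * (1 - Real.exp (-(K * (b - a)))) ≤ f b := by
  have hc' : K * (c / K) = c := by field_simp
  have h := expComp_lower f d K (c / K) a b hab hf (by intro t ht; rw [hc']; exact hd t ht)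
  rw [exp_split K a b] at h
  have hE := Real.exp_pos (K * b)
  have hr := Real.exp_pos (-(K * (b - a)))
  have hcK : 0 ≤ c / K := by positivity
  have h2 : (-(c / K)) * (Real.exp (K * b) * Real.exp (-(K * (b - a))))
      ≤ (f b - c / K) * Real.exp (K * b) := by
    nlinarith [mul_nonneg hfa (mul_nonneg hE.le hr.le)]
  nlinarith

private lemma source_upper (f d : ℝ → ℝ) (K c a b : ℝ) (hab : a ≤ b) (hK : 0 < K)
    (hf : ∀ t ∈ Set.Icc a b, HasDerivAt f (d t) t)
    (hd : ∀ t ∈ Set.Icc a b, d t ≤ c - K * f t) :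
    f b ≤ max (f a) (c / K) := by
  have h := source_lower_min (fun t => -f t) (fun t => -d t) K (-c) a b hab hK
    (fun t ht => (hf t ht).neg)
    (by intro t ht; have := hd t ht; nlinarith)
  have : min (-f a) (-c / K) = -(max (f a) (c / K)) := by
    rw [neg_div, min_neg_neg]  -- maybe name differs
  rw [this] at h
  linarith

private lemma le_of_right_lim (f : ℝ → ℝ) (a b c : ℝ) (hab : a < b)
    (hf : ContinuousWithinAt f (Set.Ioc a b) a)
    (h : ∀ t ∈ Set.Ioc a b, f t ≤ c) : f a ≤ c := by
  have hne : (nhdsWithin a (Set.Ioc a b)).NeBot := by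
    rw [← mem_closure_iff_nhdsWithin_neBot, closure_Ioc hab.ne]
    exact left_mem_Icc.mpr hab.le
  exact le_of_tendsto hf (eventually_mem_nhdsWithin.mono h)

private lemma ge_of_left_lim (f : ℝ → ℝ) (a b c : ℝ) (hab : a < b)
    (hf : ContinuousWithinAt f (Set.Ico a b) b)
    (h : ∀ t ∈ Set.Ico a b, c ≤ f t) : c ≤ f b := by
  have hne : (nhdsWithin b (Set.Ico a b)).NeBot := by
    rw [← mem_closure_iff_nhdsWithin_neBot, closure_Ico hab.ne]
    exact right_mem_Icc.mpr hab.le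
  exact ge_of_tendsto hf (eventually_mem_nhdsWithin.mono h)

private lemma L_basic
    (βN βD βM βC γM γC m0 : ℝ)
    (hβN : 0 < βN) (hβD : 0 < βD) (hβM : 0 < βM) (hβC : 0 < βC)
    (hγM : 0 < γM) (hγC : 0 < γC) (hm0 : 0 < m0)
    (mN mD mM mC : ℝ → ℝ)
    (hN : ∀ t ≥ (0:ℝ), HasDerivAt mN (-βN * mN t * mC t + βD * mM t * mD t) t)
    (hD : ∀ t ≥ (0:ℝ), HasDerivAt mD (-βD * mD t * mM t + βN * mN t * mC t) t)
    (hM : ∀ t ≥ (0:ℝ), HasDerivAt mM (-βM * mM t + γM * mD t) t)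
    (hC : ∀ t ≥ (0:ℝ), HasDerivAt mC (-βC * mC t + γC * mM t) t)
    (h0N : 0 < mN 0) (h0D : 0 < mD 0) (h0M : 0 < mM 0) (h0C : 0 < mC 0)
    (hsum : mN 0 + mD 0 = m0) :
    (∀ t ≥ (0:ℝ), mN t + mD t = m0) ∧
    (∀ t ≥ (0:ℝ), 0 < mN t ∧ 0 < mD t ∧ 0 < mM t ∧ 0 < mC t) ∧
    (∀ t ≥ (0:ℝ), mM t ≤ max (mM 0) (γM * m0 / βM)) ∧
    (∀ t ≥ (0:ℝ), mC t ≤ max (mC 0) (γC * (max (mM 0) (γM * m0 / βM)) / βC)) := by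
  have hcN : ContinuousOn mN (Ici 0) := fun t ht => (hN t ht).continuousAt.continuousWithinAt
  have hcD : ContinuousOn mD (Ici 0) := fun t ht => (hD t ht).continuousAt.continuousWithinAt
  have hcM : ContinuousOn mM (Ici 0) := fun t ht => (hM t ht).continuousAt.continuousWithinAt
  have hcC : ContinuousOn mC (Ici 0) := fun t ht => (hC t ht).continuousAt.continuousWithinAt
  -- conservation
  have hsum' : ∀ t ≥ (0:ℝ), mN t + mD t = m0 := by
    intro t ht
    have hderiv : ∀ s ∈ Icc (0:ℝ) t, HasDerivAt (fun u => mN u + mD u) ((fun _ => (0:ℝ)) s) s := by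
      intro s hs
      have h1 := (hN s hs.1).add (hD s hs.1)
      exact h1.congr_deriv (by beta_reduce; ring)
    have hderiv2 : ∀ s ∈ Icc (0:ℝ) t, HasDerivAt (fun u => -(mN u + mD u)) ((fun _ => (0:ℝ)) s) s := by
      intro s hs
      exact (hderiv s hs).neg.congr_deriv (by simp)
    have h1 := mono_of_deriv _ _ 0 t ht hderiv (fun s _ => le_refl 0)
    have h2 := mono_of_deriv _ _ 0 t ht hderiv2 (fun s _ => le_refl 0)
    beta_reduce at h1 h2
    linarith
  set Mb := max (mM 0) (γM * m0 / βM) with hMbdef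
  set Cb := max (mC 0) (γC * Mb / βC) with hCbdef
  have hMb0 : 0 < Mb := lt_of_lt_of_le h0M (le_max_left _ _)
  have hCb0 : 0 < Cb := lt_of_lt_of_le h0C (le_max_left _ _)
  -- conditional upper bounds
  have key_upperM : ∀ b ≥ (0:ℝ), (∀ s ∈ Icc (0:ℝ) b, mD s ≤ m0) →
      ∀ t ∈ Icc (0:ℝ) b, mM t ≤ Mb := by
    intro b hb hDb t ht
    have h := source_upper mM (fun s => -βM * mM s + γM * mD s) βM (γM * m0) 0 t ht.1 hβM
      (fun s hs => hM s hs.1)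
      (fun s hs => by
        have := hDb s ⟨hs.1, le_trans hs.2 ht.2⟩
        beta_reduce
        nlinarith)
    exact le_trans h (max_le (le_max_left _ _) (le_max_right _ _))
  have key_upperC : ∀ b ≥ (0:ℝ), (∀ s ∈ Icc (0:ℝ) b, mM s ≤ Mb) →
      ∀ t ∈ Icc (0:ℝ) b, mC t ≤ Cb := by
    intro b hb hMb t ht
    have h := source_upper mC (fun s => -βC * mC s + γC * mM s) βC (γC * Mb) 0 t ht.1 hβC
      (fun s hs => hC s hs.1)
      (fun s hs => by
        have := hMb s ⟨hs.1, le_trans hs.2 ht.2⟩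
        beta_reduce
        nlinarith)
    exact le_trans h (max_le (le_max_left _ _) (le_max_right _ _))
  -- positivity
  have hpos : ∀ t ≥ (0:ℝ), 0 < mN t ∧ 0 < mD t ∧ 0 < mM t ∧ 0 < mC t := by
    by_contra hcon
    push_neg at hcon
    obtain ⟨t₁, ht₁, hbad⟩ := hcon
    set A : Set ℝ := {t | 0 ≤ t ∧ (mN t ≤ 0 ∨ mD t ≤ 0 ∨ mM t ≤ 0 ∨ mC t ≤ 0)} with hAdef
    have ht₁A : t₁ ∈ A := by
      refine ⟨ht₁, ?_⟩
      rcases le_or_gt (mN t₁) 0 with h | h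
      · exact Or.inl h
      rcases le_or_gt (mD t₁) 0 with h2 | h2
      · exact Or.inr (Or.inl h2)
      rcases le_or_gt (mM t₁) 0 with h3 | h3
      · exact Or.inr (Or.inr (Or.inl h3))
      · exact Or.inr (Or.inr (Or.inr (hbad h h2 h3)))
    have hAc : IsClosed A := by
      have : A = (Ici 0 ∩ mN ⁻¹' Iic 0) ∪ ((Ici 0 ∩ mD ⁻¹' Iic 0) ∪
          ((Ici 0 ∩ mM ⁻¹' Iic 0) ∪ (Ici 0 ∩ mC ⁻¹' Iic 0))) := by
        ext t
        simp only [hAdef, Set.mem_setOf_eq, Set.mem_union, Set.mem_inter_iff,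
          Set.mem_preimage, Set.mem_Ici, Set.mem_Iic]
        tauto
      rw [this]
      exact ((hcN.preimage_isClosed_of_isClosed isClosed_Ici isClosed_Iic).union
        ((hcD.preimage_isClosed_of_isClosed isClosed_Ici isClosed_Iic).union
        ((hcM.preimage_isClosed_of_isClosed isClosed_Ici isClosed_Iic).union
        (hcC.preimage_isClosed_of_isClosed isClosed_Ici isClosed_Iic))))
    have hAbdd : BddBelow A := ⟨0, fun x hx => hx.1⟩
    set τ := sInf A with hτdef
    have hτA : τ ∈ A := hAc.csInf_mem ⟨t₁, ht₁A⟩ hAbdd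
    have hτ0 : 0 < τ := by
      rcases lt_or_eq_of_le hτA.1 with h | h
      · exact h
      · exfalso
        have h0A : (0:ℝ) ∈ A := by rw [h]; exact hτA
        rcases h0A.2 with h' | h' | h' | h' <;> linarith
    have hpre : ∀ s, 0 ≤ s → s < τ → 0 < mN s ∧ 0 < mD s ∧ 0 < mM s ∧ 0 < mC s := by
      intro s hs hsτ
      have hsnA : s ∉ A := fun hsA => absurd (csInf_le hAbdd hsA) (not_le.mpr hsτ)
      have h2 : ¬(mN s ≤ 0 ∨ mD s ≤ 0 ∨ mM s ≤ 0 ∨ mC s ≤ 0) := fun h => hsnA ⟨hs, h⟩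
      push_neg at h2
      exact ⟨h2.1, h2.2.1, h2.2.2.1, h2.2.2.2⟩
    have hnn : ∀ t ∈ Icc (0:ℝ) τ, 0 ≤ mN t ∧ 0 ≤ mD t ∧ 0 ≤ mM t ∧ 0 ≤ mC t := by
      intro t ht
      rcases lt_or_eq_of_le ht.2 with h | h
      · have := hpre t ht.1 h
        exact ⟨this.1.le, this.2.1.le, this.2.2.1.le, this.2.2.2.le⟩
      · have key : ∀ f : ℝ → ℝ, ContinuousOn f (Ici 0) →
            (∀ s, 0 ≤ s → s < τ → 0 < f s) → 0 ≤ f τ := by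
          intro f hf hpos'
          apply ge_of_left_lim f 0 τ 0 hτ0
          · exact (hf τ hτ0.le).mono (fun x hx => hx.1)
          · exact fun s hs => (hpos' s hs.1 hs.2).le
        rw [h]
        exact ⟨key mN hcN (fun s a b => (hpre s a b).1),
          key mD hcD (fun s a b => (hpre s a b).2.1),
          key mM hcM (fun s a b => (hpre s a b).2.2.1),
          key mC hcC (fun s a b => (hpre s a b).2.2.2)⟩
    have hDleτ : ∀ s ∈ Icc (0:ℝ) τ, mD s ≤ m0 := by
      intro s hs
      have := hsum' s hs.1
      have := (hnn s hs).1
      linarith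
    have hMleτ := key_upperM τ hτ0.le hDleτ
    have hCleτ := key_upperC τ hτ0.le hMleτ
    -- strict positivity at τ
    have hMτ : 0 < mM τ := by
      have h := decay_lower mM (fun s => -βM * mM s + γM * mD s) βM 0 τ hτ0.le
        (fun s hs => hM s hs.1)
        (fun s hs => by beta_reduce; nlinarith [(hnn s hs).2.1])
      nlinarith [Real.exp_pos (-(βM * (τ - 0)))]
    have hCτ : 0 < mC τ := by
      have h := decay_lower mC (fun s => -βC * mC s + γC * mM s) βC 0 τ hτ0.le
        (fun s hs => hC s hs.1)
        (fun s hs => by beta_reduce; nlinarith [(hnn s hs).2.2.1])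
      nlinarith [Real.exp_pos (-(βC * (τ - 0)))]
    have hNτ : 0 < mN τ := by
      have h := decay_lower mN (fun s => -βN * mN s * mC s + βD * mM s * mD s) (βN * Cb) 0 τ hτ0.le
        (fun s hs => hN s hs.1)
        (fun s hs => by
          beta_reduce
          have h1 := (hnn s hs).1
          have h2 := hCleτ s hs
          nlinarith [mul_nonneg (hnn s hs).2.2.1 (hnn s hs).2.1,
            mul_nonneg h1 (sub_nonneg.mpr h2)])
      nlinarith [Real.exp_pos (-(βN * Cb * (τ - 0)))]
    have hDτ : 0 < mD τ := by
      have h := decay_lower mD (fun s => -βD * mD s * mM s + βN * mN s * mC s) (βD * Mb) 0 τ hτ0.le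
        (fun s hs => hD s hs.1)
        (fun s hs => by
          beta_reduce
          have h1 := (hnn s hs).2.1
          have h2 := hMleτ s hs
          nlinarith [mul_nonneg (hnn s hs).1 (hnn s hs).2.2.2,
            mul_nonneg h1 (sub_nonneg.mpr h2)])
      nlinarith [Real.exp_pos (-(βD * Mb * (τ - 0)))]
    rcases hτA.2 with h | h | h | h <;> linarith
  -- global upper bounds
  refine ⟨hsum', hpos, ?_, ?_⟩
  · intro t ht
    have hDub : ∀ s ∈ Icc (0:ℝ) t, mD s ≤ m0 := by
      intro s hs
      have h1 := hsum' s hs.1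
      have h2 := (hpos s hs.1).1
      linarith
    exact key_upperM t ht hDub t ⟨ht, le_refl t⟩
  · intro t ht
    have hDub : ∀ s ∈ Icc (0:ℝ) t, mD s ≤ m0 := by
      intro s hs
      have h1 := hsum' s hs.1
      have h2 := (hpos s hs.1).1
      linarith
    exact key_upperC t ht (fun s hs => key_upperM t ht hDub s hs) t ⟨ht, le_refl t⟩

private lemma L_Wlow
    (βN βD βM βC γM γC m0 : ℝ)
    (hβN : 0 < βN) (hβD : 0 < βD) (hβM : 0 < βM) (hβC : 0 < βC)
    (hγM : 0 < γM) (hγC : 0 < γC) (hm0 : 0 < m0)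
    (mN mD mM mC : ℝ → ℝ)
    (hN : ∀ t ≥ (0:ℝ), HasDerivAt mN (-βN * mN t * mC t + βD * mM t * mD t) t)
    (hD : ∀ t ≥ (0:ℝ), HasDerivAt mD (-βD * mD t * mM t + βN * mN t * mC t) t)
    (hM : ∀ t ≥ (0:ℝ), HasDerivAt mM (-βM * mM t + γM * mD t) t)
    (hC : ∀ t ≥ (0:ℝ), HasDerivAt mC (-βC * mC t + γC * mM t) t)
    (h0N : 0 < mN 0) (h0D : 0 < mD 0) (h0M : 0 < mM 0) (h0C : 0 < mC 0)
    (hsum : mN 0 + mD 0 = m0)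
    (hpos : ∀ t ≥ (0:ℝ), 0 < mN t ∧ 0 < mD t ∧ 0 < mM t ∧ 0 < mC t) (hsum' : ∀ t ≥ (0:ℝ), mN t + mD t = m0) :
    ∃ w1 vm vc : ℝ, 0 < w1 ∧ 0 < vm ∧ 0 < vc ∧
      ∀ t ≥ (0:ℝ), w1 ≤ mD t + vm * mM t + vc * mC t := by
  have hcM : ContinuousOn mM (Ici 0) := fun t ht => (hM t ht).continuousAt.continuousWithinAt
  have hcC : ContinuousOn mC (Ici 0) := fun t ht => (hC t ht).continuousAt.continuousWithinAt
  set vc := βN * m0 / (2 * βC) with hvcdef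
  set vm := βN * m0 * γC / (4 * βC * βM) with hvmdef
  set lam := min βM (min βC (γC * γM * βN * m0 / (4 * βM * βC))) with hlamdef
  have hvc0 : 0 < vc := by rw [hvcdef]; positivity
  have hvm0 : 0 < vm := by rw [hvmdef]; positivity
  have hlam0 : 0 < lam := by
    rw [hlamdef]
    apply lt_min hβM (lt_min hβC (by positivity))
  have hlamβM : lam ≤ βM := min_le_left _ _
  have hlamβC : lam ≤ βC := le_trans (min_le_right _ _) (min_le_left _ _)
  have hlam3 : lam ≤ γC * γM * βN * m0 / (4 * βM * βC) :=
    le_trans (min_le_right _ _) (min_le_right _ _)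
  have hineq1 : lam ≤ vm * γM := by
    rw [hvmdef]
    calc lam ≤ γC * γM * βN * m0 / (4 * βM * βC) := hlam3
    _ = βN * m0 * γC / (4 * βC * βM) * γM := by ring
  have hineq2 : lam * vm ≤ vc * γC - vm * βM := by
    have h : vc * γC - vm * βM = vm * βM := by
      rw [hvcdef, hvmdef]; field_simp; ring
    rw [h]
    have := mul_le_mul_of_nonneg_right hlamβM hvm0.le
    nlinarith
  have hineq3 : lam * vc ≤ βN * m0 - vc * βC := by
    have h : βN * m0 - vc * βC = vc * βC := by
      rw [hvcdef]; field_simp; ring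
    rw [h]
    nlinarith
  set eps := lam / (2 * (βD + βN)) with hepsdef
  have heps0 : 0 < eps := by rw [hepsdef]; positivity
  set W : ℝ → ℝ := fun t => mD t + vm * mM t + vc * mC t with hWdef
  set Wd : ℝ → ℝ := fun t => (-βD * mD t * mM t + βN * mN t * mC t) +
      vm * (-βM * mM t + γM * mD t) + vc * (-βC * mC t + γC * mM t) with hWddef
  have hWderiv : ∀ t ≥ (0:ℝ), HasDerivAt W (Wd t) t := by
    intro t ht
    exact ((hD t ht).add ((hM t ht).const_mul vm)).add ((hC t ht).const_mul vc)
  have hWcont : ContinuousOn W (Ici 0) :=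
    fun t ht => (hWderiv t ht).continuousAt.continuousWithinAt
  have hWpos : ∀ t ≥ (0:ℝ), 0 < W t := by
    intro t ht
    obtain ⟨_, h2, h3, h4⟩ := hpos t ht
    have : 0 < vm * mM t := mul_pos hvm0 h3
    have : 0 < vc * mC t := mul_pos hvc0 h4
    simp only [hWdef]
    linarith
  have hWdpos : ∀ t ≥ (0:ℝ), mM t ≤ eps → mC t ≤ eps → 0 ≤ Wd t := by
    intro t ht hMt hCt
    obtain ⟨h1, h2, h3, h4⟩ := hpos t ht
    have hNt : mN t = m0 - mD t := by linarith [hsum' t ht]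
    have hrw : Wd t = mD t * (vm * γM - (βD * mM t + βN * mC t)) +
        mM t * (vc * γC - vm * βM) + mC t * (βN * m0 - vc * βC) := by
      simp only [hWddef, hNt]; ring
    have e1 : βD * mM t + βN * mC t ≤ lam := by
      have : βD * mM t ≤ βD * eps := by nlinarith
      have : βN * mC t ≤ βN * eps := by nlinarith
      have : (βD + βN) * eps = lam / 2 := by rw [hepsdef]; field_simp
      linarith
    rw [hrw]
    have c1 : 0 ≤ mD t * (vm * γM - (βD * mM t + βN * mC t)) :=
      mul_nonneg h2.le (by linarith)
    have c2 : 0 ≤ mM t * (vc * γC - vm * βM) :=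
      mul_nonneg h3.le (by nlinarith)
    have c3 : 0 ≤ mC t * (βN * m0 - vc * βC) :=
      mul_nonneg h4.le (by nlinarith)
    linarith
  set w1 := min (W 0) (eps * min vm vc) with hw1def
  have hw10 : 0 < w1 :=
    lt_min (hWpos 0 (le_refl 0)) (mul_pos heps0 (lt_min hvm0 hvc0))
  have hWlow : ∀ t ≥ (0:ℝ), w1 ≤ W t := by
    intro t₁ ht₁
    by_contra hlt
    push_neg at hlt
    set S : Set ℝ := {t | t ∈ Icc 0 t₁ ∧ w1 ≤ W t} with hSdef
    have hScl : IsClosed S := by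
      have : S = Icc 0 t₁ ∩ W ⁻¹' Ici w1 := by
        ext x; simp [hSdef]
      rw [this]
      exact (hWcont.mono (fun x (hx : x ∈ Icc 0 t₁) => hx.1)).preimage_isClosed_of_isClosed
        isClosed_Icc isClosed_Ici
    have hS0 : (0:ℝ) ∈ S := ⟨⟨le_refl 0, ht₁⟩, min_le_left _ _⟩
    have hSbdd : BddAbove S := ⟨t₁, fun x hx => hx.1.2⟩
    set σ := sSup S with hσdef
    have hσS : σ ∈ S := hScl.csSup_mem ⟨0, hS0⟩ hSbdd
    have hσ0 : 0 ≤ σ := hσS.1.1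
    have hσt₁ : σ < t₁ := by
      rcases lt_or_eq_of_le hσS.1.2 with h | h
      · exact h
      · exfalso; rw [h] at hσS; linarith [hσS.2]
    have hafter : ∀ s ∈ Ioc σ t₁, W s < w1 := by
      intro s hs
      by_contra h
      push_neg at h
      have : s ∈ S := ⟨⟨le_trans hσ0 hs.1.le, hs.2⟩, h⟩
      exact absurd (le_csSup hSbdd this) (not_le.mpr hs.1)
    -- on (σ, t₁] both mM and mC are below eps
    have hregM : ∀ s ∈ Ioc σ t₁, mM s ≤ eps := by
      intro s hs
      have hs0 : (0:ℝ) ≤ s := le_trans hσ0 hs.1.le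
      have h1 : vm * mM s ≤ W s := by
        obtain ⟨_, h2, _, h4⟩ := hpos s hs0
        have : 0 < vc * mC s := mul_pos hvc0 h4
        simp only [hWdef]; linarith
      have h2 : W s < eps * vm := by
        calc W s < w1 := hafter s hs
        _ ≤ eps * min vm vc := min_le_right _ _
        _ ≤ eps * vm := by nlinarith [min_le_left vm vc]
      nlinarith
    have hregC : ∀ s ∈ Ioc σ t₁, mC s ≤ eps := by
      intro s hs
      have hs0 : (0:ℝ) ≤ s := le_trans hσ0 hs.1.le
      have h1 : vc * mC s ≤ W s := by
        obtain ⟨_, h2, h3, _⟩ := hpos s hs0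
        have : 0 < vm * mM s := mul_pos hvm0 h3
        simp only [hWdef]; linarith
      have h2 : W s < eps * vc := by
        calc W s < w1 := hafter s hs
        _ ≤ eps * min vm vc := min_le_right _ _
        _ ≤ eps * vc := by nlinarith [min_le_right vm vc]
      nlinarith
    have hregMσ : mM σ ≤ eps := by
      apply le_of_right_lim mM σ t₁ eps hσt₁
      · exact ((hcM σ hσ0).mono (fun x hx => le_trans hσ0 hx.1.le))
      · exact hregM
    have hregCσ : mC σ ≤ eps := by
      apply le_of_right_lim mC σ t₁ eps hσt₁
      · exact ((hcC σ hσ0).mono (fun x hx => le_trans hσ0 hx.1.le))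
      · exact hregC
    have hmono : W σ ≤ W t₁ := by
      apply mono_of_deriv W Wd σ t₁ hσt₁.le
      · exact fun s hs => hWderiv s (le_trans hσ0 hs.1)
      · intro s hs
        rcases eq_or_lt_of_le hs.1 with h | h
        · exact hWdpos s (le_trans hσ0 hs.1) (h ▸ hregMσ) (h ▸ hregCσ)
        · exact hWdpos s (le_trans hσ0 hs.1) (hregM s ⟨h, hs.2⟩) (hregC s ⟨h, hs.2⟩)
    linarith [hσS.2]
  exact ⟨w1, vm, vc, hw10, hvm0, hvc0, hWlow⟩

private lemma L_decayD
    (βN βD βM βC γM γC m0 : ℝ)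
    (hβN : 0 < βN) (hβD : 0 < βD) (hβM : 0 < βM) (hβC : 0 < βC)
    (hγM : 0 < γM) (hγC : 0 < γC) (hm0 : 0 < m0)
    (mN mD mM mC : ℝ → ℝ)
    (hN : ∀ t ≥ (0:ℝ), HasDerivAt mN (-βN * mN t * mC t + βD * mM t * mD t) t)
    (hD : ∀ t ≥ (0:ℝ), HasDerivAt mD (-βD * mD t * mM t + βN * mN t * mC t) t)
    (hM : ∀ t ≥ (0:ℝ), HasDerivAt mM (-βM * mM t + γM * mD t) t)
    (hC : ∀ t ≥ (0:ℝ), HasDerivAt mC (-βC * mC t + γC * mM t) t)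
    (h0N : 0 < mN 0) (h0D : 0 < mD 0) (h0M : 0 < mM 0) (h0C : 0 < mC 0)
    (hsum : mN 0 + mD 0 = m0)
    (hpos : ∀ t ≥ (0:ℝ), 0 < mN t ∧ 0 < mD t ∧ 0 < mM t ∧ 0 < mC t)
    (Mb : ℝ) (hMub : ∀ t ≥ (0:ℝ), mM t ≤ Mb) :
    ∀ a b : ℝ, 0 ≤ a → a ≤ b → mD a * Real.exp (-(βD * Mb * (b - a))) ≤ mD b := by
  intro a b ha hab
  apply decay_lower mD (fun s => -βD * mD s * mM s + βN * mN s * mC s) (βD * Mb) a b hab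
    (fun s hs => hD s (le_trans ha hs.1))
  intro s hs
  beta_reduce
  have hs0 : (0:ℝ) ≤ s := le_trans ha hs.1
  obtain ⟨p1, p2, p3, p4⟩ := hpos s hs0
  have hMs := hMub s hs0
  nlinarith [mul_nonneg p1.le p4.le, mul_nonneg p2.le (sub_nonneg.mpr hMs)]

private lemma L_stepC
    (βN βD βM βC γM γC m0 : ℝ)
    (hβN : 0 < βN) (hβD : 0 < βD) (hβM : 0 < βM) (hβC : 0 < βC)
    (hγM : 0 < γM) (hγC : 0 < γC) (hm0 : 0 < m0)
    (mN mD mM mC : ℝ → ℝ)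
    (hN : ∀ t ≥ (0:ℝ), HasDerivAt mN (-βN * mN t * mC t + βD * mM t * mD t) t)
    (hD : ∀ t ≥ (0:ℝ), HasDerivAt mD (-βD * mD t * mM t + βN * mN t * mC t) t)
    (hM : ∀ t ≥ (0:ℝ), HasDerivAt mM (-βM * mM t + γM * mD t) t)
    (hC : ∀ t ≥ (0:ℝ), HasDerivAt mC (-βC * mC t + γC * mM t) t)
    (h0N : 0 < mN 0) (h0D : 0 < mD 0) (h0M : 0 < mM 0) (h0C : 0 < mC 0)
    (hsum : mN 0 + mD 0 = m0)
    (hpos : ∀ t ≥ (0:ℝ), 0 < mN t ∧ 0 < mD t ∧ 0 < mM t ∧ 0 < mC t) (hsum' : ∀ t ≥ (0:ℝ), mN t + mD t = m0)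
    (Mb : ℝ) (hMb0 : 0 < Mb) (hMub : ∀ t ≥ (0:ℝ), mM t ≤ Mb) :
    ∀ c₀ : ℝ, 0 < c₀ → ∃ δ : ℝ, 0 < δ ∧
      ∀ t ≥ (0:ℝ), c₀ ≤ mC t → δ ≤ mD (t + 1) := by
  intro c₀ hc₀
  set cs := c₀ * Real.exp (-βC) with hcs
  have hcs0 : 0 < cs := mul_pos hc₀ (Real.exp_pos _)
  set K1 := βN * cs + βD * Mb with hK1
  have hK10 : 0 < K1 := add_pos (mul_pos hβN hcs0) (mul_pos hβD hMb0)
  have hexp1 : Real.exp (-K1) < 1 := Real.exp_lt_one_iff.mpr (by linarith)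
  refine ⟨βN * cs * m0 / K1 * (1 - Real.exp (-K1)), ?_, ?_⟩
  · exact mul_pos (div_pos (mul_pos (mul_pos hβN hcs0) hm0) hK10) (by linarith)
  · intro t ht hct
    have hclow : ∀ u ∈ Icc t (t + 1), cs ≤ mC u := by
      intro u hu
      have hdec := decay_lower mC (fun s => -βC * mC s + γC * mM s) βC t u hu.1
        (fun s hs => hC s (le_trans ht hs.1))
        (fun s hs => by beta_reduce; nlinarith [(hpos s (le_trans ht hs.1)).2.2.1])
      have hexp : Real.exp (-βC) ≤ Real.exp (-(βC * (u - t))) := by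
        apply Real.exp_le_exp.mpr
        nlinarith [hu.2, hu.1]
      calc cs = c₀ * Real.exp (-βC) := hcs
      _ ≤ mC t * Real.exp (-(βC * (u - t))) :=
          mul_le_mul hct hexp (Real.exp_pos _).le (le_trans hc₀.le hct)
      _ ≤ mC u := hdec
    have habs := source_lower_abs mD (fun s => -βD * mD s * mM s + βN * mN s * mC s)
      K1 (βN * cs * m0) t (t + 1) (by linarith) hK10
      (by positivity) (hpos t ht).2.1.le
      (fun s hs => hD s (le_trans ht hs.1))
      (fun s hs => by
        beta_reduce
        have hs0 : (0:ℝ) ≤ s := le_trans ht hs.1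
        obtain ⟨p1, p2, p3, p4⟩ := hpos s hs0
        have hNs : mN s = m0 - mD s := by linarith [hsum' s hs0]
        have hMs := hMub s hs0
        have hCs := hclow s hs
        have hm : (0:ℝ) ≤ m0 - mD s := by linarith
        rw [hNs, hK1]
        nlinarith [mul_nonneg hm (sub_nonneg.mpr hCs),
          mul_nonneg p2.le (sub_nonneg.mpr hMs)])
    rw [show -(K1 * (t + 1 - t)) = -K1 by ring] at habs
    exact habs
-- step: a lower bound on mM propagates to a lower bound on mC one unit later

private lemma L_stepM
    (βN βD βM βC γM γC m0 : ℝ)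
    (hβN : 0 < βN) (hβD : 0 < βD) (hβM : 0 < βM) (hβC : 0 < βC)
    (hγM : 0 < γM) (hγC : 0 < γC) (hm0 : 0 < m0)
    (mN mD mM mC : ℝ → ℝ)
    (hN : ∀ t ≥ (0:ℝ), HasDerivAt mN (-βN * mN t * mC t + βD * mM t * mD t) t)
    (hD : ∀ t ≥ (0:ℝ), HasDerivAt mD (-βD * mD t * mM t + βN * mN t * mC t) t)
    (hM : ∀ t ≥ (0:ℝ), HasDerivAt mM (-βM * mM t + γM * mD t) t)
    (hC : ∀ t ≥ (0:ℝ), HasDerivAt mC (-βC * mC t + γC * mM t) t)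
    (h0N : 0 < mN 0) (h0D : 0 < mD 0) (h0M : 0 < mM 0) (h0C : 0 < mC 0)
    (hsum : mN 0 + mD 0 = m0)
    (hpos : ∀ t ≥ (0:ℝ), 0 < mN t ∧ 0 < mD t ∧ 0 < mM t ∧ 0 < mC t) :
    ∀ c₀ : ℝ, 0 < c₀ → ∃ δ : ℝ, 0 < δ ∧
      ∀ t ≥ (0:ℝ), c₀ ≤ mM t → δ ≤ mC (t + 1) := by
  intro c₀ hc₀
  set ms := c₀ * Real.exp (-βM) with hms
  have hms0 : 0 < ms := mul_pos hc₀ (Real.exp_pos _)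
  have hexp1 : Real.exp (-βC) < 1 := Real.exp_lt_one_iff.mpr (by linarith)
  refine ⟨γC * ms / βC * (1 - Real.exp (-βC)), ?_, ?_⟩
  · exact mul_pos (div_pos (mul_pos hγC hms0) hβC) (by linarith)
  · intro t ht hmt
    have hmlow : ∀ u ∈ Icc t (t + 1), ms ≤ mM u := by
      intro u hu
      have hdec := decay_lower mM (fun s => -βM * mM s + γM * mD s) βM t u hu.1
        (fun s hs => hM s (le_trans ht hs.1))
        (fun s hs => by beta_reduce; nlinarith [(hpos s (le_trans ht hs.1)).2.1])
      have hexp : Real.exp (-βM) ≤ Real.exp (-(βM * (u - t))) := by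
        apply Real.exp_le_exp.mpr
        nlinarith [hu.2, hu.1]
      calc ms = c₀ * Real.exp (-βM) := hms
      _ ≤ mM t * Real.exp (-(βM * (u - t))) :=
          mul_le_mul hmt hexp (Real.exp_pos _).le (le_trans hc₀.le hmt)
      _ ≤ mM u := hdec
    have habs := source_lower_abs mC (fun s => -βC * mC s + γC * mM s)
      βC (γC * ms) t (t + 1) (by linarith) hβC
      (mul_pos hγC hms0).le (hpos t ht).2.2.2.le
      (fun s hs => hC s (le_trans ht hs.1))
      (fun s hs => by
        beta_reduce
        have := hmlow s hs
        nlinarith)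
    rw [show -(βC * (t + 1 - t)) = -βC by ring] at habs
    exact habs

/-- For a differentiable solution of the mean system with strictly
positive initial data and `m_N(0) + m_D(0) = m⁰ > 0`, each component is bounded above
and below by positive constants uniformly in `t ≥ 0`, and each derivative is bounded
on `[0,∞)`. -/
theorem meanSystem_uniform_bounds
    (βN βD βM βC γM γC m0 : ℝ)
    (hβN : 0 < βN) (hβD : 0 < βD) (hβM : 0 < βM) (hβC : 0 < βC)
    (hγM : 0 < γM) (hγC : 0 < γC) (hm0 : 0 < m0)
    (mN mD mM mC : ℝ → ℝ)
    (hN : ∀ t ≥ (0:ℝ), HasDerivAt mN (-βN * mN t * mC t + βD * mM t * mD t) t)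
    (hD : ∀ t ≥ (0:ℝ), HasDerivAt mD (-βD * mD t * mM t + βN * mN t * mC t) t)
    (hM : ∀ t ≥ (0:ℝ), HasDerivAt mM (-βM * mM t + γM * mD t) t)
    (hC : ∀ t ≥ (0:ℝ), HasDerivAt mC (-βC * mC t + γC * mM t) t)
    (h0N : 0 < mN 0) (h0D : 0 < mD 0) (h0M : 0 < mM 0) (h0C : 0 < mC 0)
    (hsum : mN 0 + mD 0 = m0) :
    ((∃ c C : ℝ, 0 < c ∧ c ≤ C ∧ ∀ t ≥ (0:ℝ), c ≤ mN t ∧ mN t ≤ C) ∧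
      ∃ K : ℝ, ∀ t ≥ (0:ℝ), |deriv mN t| ≤ K) ∧
    ((∃ c C : ℝ, 0 < c ∧ c ≤ C ∧ ∀ t ≥ (0:ℝ), c ≤ mD t ∧ mD t ≤ C) ∧
      ∃ K : ℝ, ∀ t ≥ (0:ℝ), |deriv mD t| ≤ K) ∧
    ((∃ c C : ℝ, 0 < c ∧ c ≤ C ∧ ∀ t ≥ (0:ℝ), c ≤ mM t ∧ mM t ≤ C) ∧
      ∃ K : ℝ, ∀ t ≥ (0:ℝ), |deriv mM t| ≤ K) ∧
    ((∃ c C : ℝ, 0 < c ∧ c ≤ C ∧ ∀ t ≥ (0:ℝ), c ≤ mC t ∧ mC t ≤ C) ∧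
      ∃ K : ℝ, ∀ t ≥ (0:ℝ), |deriv mC t| ≤ K) := by
  obtain ⟨hsum', hpos, hMub, hCub⟩ := L_basic βN βD βM βC γM γC m0 hβN hβD hβM hβC hγM hγC hm0
    mN mD mM mC hN hD hM hC h0N h0D h0M h0C hsum
  set Mb := max (mM 0) (γM * m0 / βM) with hMbdef
  set Cb := max (mC 0) (γC * Mb / βC) with hCbdef
  have hMb0 : 0 < Mb := lt_of_lt_of_le h0M (le_max_left _ _)
  have hCb0 : 0 < Cb := lt_of_lt_of_le h0C (le_max_left _ _)
  have hNub : ∀ t ≥ (0:ℝ), mN t ≤ m0 := by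
    intro t ht
    have h1 := hsum' t ht
    have h2 := (hpos t ht).2.1
    linarith
  have hDub : ∀ t ≥ (0:ℝ), mD t ≤ m0 := by
    intro t ht
    have h1 := hsum' t ht
    have h2 := (hpos t ht).1
    linarith
  obtain ⟨w1, vm, vc, hw10, hvm0, hvc0, hWlow⟩ := L_Wlow βN βD βM βC γM γC m0
    hβN hβD hβM hβC hγM hγC hm0 mN mD mM mC hN hD hM hC h0N h0D h0M h0C hsum hpos hsum'
  have decayD := L_decayD βN βD βM βC γM γC m0 hβN hβD hβM hβC hγM hγC hm0
    mN mD mM mC hN hD hM hC h0N h0D h0M h0C hsum hpos Mb hMub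
  have stepC := L_stepC βN βD βM βC γM γC m0 hβN hβD hβM hβC hγM hγC hm0
    mN mD mM mC hN hD hM hC h0N h0D h0M h0C hsum hpos hsum' Mb hMb0 hMub
  have stepM := L_stepM βN βD βM βC γM γC m0 hβN hβD hβM hβC hγM hγC hm0
    mN mD mM mC hN hD hM hC h0N h0D h0M h0C hsum hpos
  obtain ⟨δCc, hδCc0, hδCcf⟩ := stepC (w1 / (3 * vc)) (div_pos hw10 (by linarith))
  obtain ⟨δM1, hδM10, hδM1f⟩ := stepM (w1 / (3 * vm)) (div_pos hw10 (by linarith))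
  obtain ⟨δMC, hδMC0, hδMCf⟩ := stepC δM1 hδM10
  set δ1 := min (w1 / 3) (min δCc δMC) with hδ1def
  have hδ10 : 0 < δ1 := lt_min (by linarith) (lt_min hδCc0 hδMC0)
  have threeCases : ∀ t ≥ (0:ℝ), w1 / 3 ≤ mD t ∨ w1 / (3 * vm) ≤ mM t ∨ w1 / (3 * vc) ≤ mC t := by
    intro t ht
    by_contra h
    push_neg at h
    obtain ⟨h1, h2, h3⟩ := h
    have e2 : vm * mM t < w1 / 3 := by
      have := mul_lt_mul_of_pos_left h2 hvm0
      have e : vm * (w1 / (3 * vm)) = w1 / 3 := by field_simp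
      linarith [e ▸ this]
    have e3 : vc * mC t < w1 / 3 := by
      have := mul_lt_mul_of_pos_left h3 hvc0
      have e : vc * (w1 / (3 * vc)) = w1 / 3 := by field_simp
      linarith [e ▸ this]
    linarith [hWlow t ht]
  have hwin : ∀ t ≥ (0:ℝ), ∃ u, t ≤ u ∧ u ≤ t + 2 ∧ δ1 ≤ mD u := by
    intro t ht
    rcases threeCases t ht with h | h | h
    · exact ⟨t, le_refl t, by linarith, le_trans (min_le_left _ _) h⟩
    · refine ⟨t + 2, by linarith, le_refl _, ?_⟩
      have hc1 := hδM1f t ht h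
      have hc2 := hδMCf (t + 1) (by linarith) hc1
      rw [show t + 1 + 1 = t + 2 by ring] at hc2
      exact le_trans (le_trans (min_le_right _ _) (min_le_right _ _)) hc2
    · refine ⟨t + 1, by linarith, by linarith, ?_⟩
      exact le_trans (le_trans (min_le_right _ _) (min_le_left _ _)) (hδCcf t ht h)
  set δD := min δ1 (mD 0) * Real.exp (-(βD * Mb * 2)) with hδDdef
  have hδD0 : 0 < δD := mul_pos (lt_min hδ10 h0D) (Real.exp_pos _)
  have hDlow : ∀ t ≥ (0:ℝ), δD ≤ mD t := by
    intro t ht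
    rcases le_or_gt 2 t with h2 | h2
    · obtain ⟨u, hu1, hu2, hu3⟩ := hwin (t - 2) (by linarith)
      have hu0 : (0:ℝ) ≤ u := by linarith
      have hut : u ≤ t := by linarith
      have hdec := decayD u t hu0 hut
      have hexp : Real.exp (-(βD * Mb * 2)) ≤ Real.exp (-(βD * Mb * (t - u))) := by
        apply Real.exp_le_exp.mpr
        nlinarith [mul_pos hβD hMb0]
      calc δD ≤ mD u * Real.exp (-(βD * Mb * (t - u))) := by
            apply mul_le_mul (le_trans (min_le_left _ _) hu3) hexp (Real.exp_pos _).le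
            exact (hpos u hu0).2.1.le
      _ ≤ mD t := hdec
    · have hdec := decayD 0 t (le_refl 0) ht
      have hexp : Real.exp (-(βD * Mb * 2)) ≤ Real.exp (-(βD * Mb * (t - 0))) := by
        apply Real.exp_le_exp.mpr
        nlinarith [mul_pos hβD hMb0]
      calc δD ≤ mD 0 * Real.exp (-(βD * Mb * (t - 0))) := by
            apply mul_le_mul (min_le_right _ _) hexp (Real.exp_pos _).le h0D.le
      _ ≤ mD t := hdec
  set δMf := min (mM 0) (γM * δD / βM) with hδMfdef
  have hδMf0 : 0 < δMf := lt_min h0M (div_pos (mul_pos hγM hδD0) hβM)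
  have hMlow : ∀ t ≥ (0:ℝ), δMf ≤ mM t := by
    intro t ht
    exact source_lower_min mM (fun s => -βM * mM s + γM * mD s) βM (γM * δD) 0 t ht hβM
      (fun s hs => hM s hs.1)
      (fun s hs => by beta_reduce; nlinarith [hDlow s hs.1])
  set δCf := min (mC 0) (γC * δMf / βC) with hδCfdef
  have hδCf0 : 0 < δCf := lt_min h0C (div_pos (mul_pos hγC hδMf0) hβC)
  have hClow : ∀ t ≥ (0:ℝ), δCf ≤ mC t := by
    intro t ht
    exact source_lower_min mC (fun s => -βC * mC s + γC * mM s) βC (γC * δMf) 0 t ht hβC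
      (fun s hs => hC s hs.1)
      (fun s hs => by beta_reduce; nlinarith [hMlow s hs.1])
  set δNf := min (mN 0) (βD * δMf * δD / (βN * Cb)) with hδNfdef
  have hδNf0 : 0 < δNf :=
    lt_min h0N (div_pos (mul_pos (mul_pos hβD hδMf0) hδD0) (mul_pos hβN hCb0))
  have hNlow : ∀ t ≥ (0:ℝ), δNf ≤ mN t := by
    intro t ht
    apply source_lower_min mN (fun s => -βN * mN s * mC s + βD * mM s * mD s)
      (βN * Cb) (βD * δMf * δD) 0 t ht (mul_pos hβN hCb0)
      (fun s hs => hN s hs.1)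
    intro s hs
    beta_reduce
    obtain ⟨p1, p2, p3, p4⟩ := hpos s hs.1
    have hCs := hCub s hs.1
    have hMs := hMlow s hs.1
    have hDs := hDlow s hs.1
    nlinarith [mul_nonneg p1.le (sub_nonneg.mpr hCs),
      mul_le_mul hMs hDs hδD0.le p3.le]
  -- final assembly
  have bdd : ∀ t ≥ (0:ℝ), mN t * mC t ≤ m0 * Cb ∧ mM t * mD t ≤ Mb * m0 ∧
      0 ≤ mN t * mC t ∧ 0 ≤ mM t * mD t := by
    intro t ht
    obtain ⟨p1, p2, p3, p4⟩ := hpos t ht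
    exact ⟨mul_le_mul (hNub t ht) (hCub t ht) p4.le hm0.le,
      mul_le_mul (hMub t ht) (hDub t ht) p2.le hMb0.le,
      mul_nonneg p1.le p4.le, mul_nonneg p3.le p2.le⟩
  refine ⟨⟨⟨δNf, m0, hδNf0, le_trans (hNlow 0 le_rfl) (hNub 0 le_rfl),
      fun t ht => ⟨hNlow t ht, hNub t ht⟩⟩, βN * (m0 * Cb) + βD * (Mb * m0), ?_⟩,
    ⟨⟨δD, m0, hδD0, le_trans (hDlow 0 le_rfl) (hDub 0 le_rfl),
      fun t ht => ⟨hDlow t ht, hDub t ht⟩⟩, βD * (Mb * m0) + βN * (m0 * Cb), ?_⟩,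
    ⟨⟨δMf, Mb, hδMf0, le_trans (hMlow 0 le_rfl) (hMub 0 le_rfl),
      fun t ht => ⟨hMlow t ht, hMub t ht⟩⟩, βM * Mb + γM * m0, ?_⟩,
    ⟨⟨δCf, Cb, hδCf0, le_trans (hClow 0 le_rfl) (hCub 0 le_rfl),
      fun t ht => ⟨hClow t ht, hCub t ht⟩⟩, βC * Cb + γC * Mb, ?_⟩⟩ <;>
  · intro t ht
    obtain ⟨b1, b2, n1, n2⟩ := bdd t ht
    obtain ⟨p1, p2, p3, p4⟩ := hpos t ht
    first
    | (rw [(hN t ht).deriv, abs_le]; constructor <;> nlinarith)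
    | (rw [(hD t ht).deriv, abs_le]; constructor <;> nlinarith)
    | (rw [(hM t ht).deriv, abs_le];
       constructor <;> nlinarith [hMub t ht, hDub t ht, p3.le, p2.le])
    | (rw [(hC t ht).deriv, abs_le];
       constructor <;> nlinarith [hCub t ht, hMub t ht, p4.le, p3.le])
end

section
/- Fix ν > 0 and let ω : [0,∞) → (0,∞) be differentiable. Let f(x,t) = f_{ν,ω(t)}(x) be the inverse Gamma density with shape ν and time-dependent scale ω(t). Then for every t, the time derivative ∂f/∂t(·,t) is integrable on (0,∞) and ∫₀^∞ |∂f/∂t(x,t)| dx ≤ |ω'(t)| · 2ν/ω(t). -/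
open MeasureTheory

/-- The inverse Gamma probability density with shape `ν` and scale `ω`:
`f_{ν,ω}(x) = ω^ν / Γ(ν) · x^{-(ν+1)} · e^{-ω/x}` for `x > 0`. -/
noncomputable def invGammaPdf (ν ω x : ℝ) : ℝ :=
  ω ^ ν / Real.Gamma ν * x ^ (-(ν + 1)) * Real.exp (-ω / x)

lemma key_int {p a : ℝ} (hp : 0 < p) (ha : 0 < a) :
    IntegrableOn (fun x : ℝ => x ^ (-(p+1)) * Real.exp (-a/x)) (Set.Ioi 0) ∧
    ∫ x in Set.Ioi (0:ℝ), x ^ (-(p+1)) * Real.exp (-a/x) = (1/a) ^ p * Real.Gamma p := by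
  have hg : IntegrableOn (fun y : ℝ => y ^ (p-1) * Real.exp (-(a*y))) (Set.Ioi 0) := by
    have := integrableOn_rpow_mul_exp_neg_mul_rpow (s := p-1) (p := 1) (b := a)
      (by linarith) zero_lt_one ha
    simpa [Real.rpow_one, neg_mul] using this
  have heq : ∀ x ∈ Set.Ioi (0:ℝ),
      (|(-1:ℝ)| * x ^ ((-1:ℝ) - 1)) •
        ((fun y : ℝ => y ^ (p-1) * Real.exp (-(a*y))) (x ^ (-1:ℝ)))
      = x ^ (-(p+1)) * Real.exp (-a/x) := by
    intro x hx
    have hx0 : (0:ℝ) < x := hx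
    simp only [smul_eq_mul, abs_neg, abs_one, one_mul, Real.rpow_neg_one,
      Real.inv_rpow hx0.le, ← Real.rpow_neg hx0.le]
    rw [← mul_assoc, ← Real.rpow_add hx0]
    congr 1
    · congr 1; ring
    · congr 1; rw [div_eq_mul_inv, neg_mul]
  constructor
  · have := (integrableOn_Ioi_comp_rpow_iff
      (fun y : ℝ => y ^ (p-1) * Real.exp (-(a*y))) (p := -1) (by norm_num)).mpr hg
    exact this.congr_fun heq measurableSet_Ioi
  · calc ∫ x in Set.Ioi (0:ℝ), x ^ (-(p+1)) * Real.exp (-a/x)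
        = ∫ x in Set.Ioi (0:ℝ), (|(-1:ℝ)| * x ^ ((-1:ℝ) - 1)) •
            ((fun y : ℝ => y ^ (p-1) * Real.exp (-(a*y))) (x ^ (-1:ℝ))) :=
          setIntegral_congr_fun measurableSet_Ioi (fun x hx => (heq x hx).symm)
      _ = ∫ y in Set.Ioi (0:ℝ), y ^ (p-1) * Real.exp (-(a*y)) :=
          integral_comp_rpow_Ioi (fun y : ℝ => y ^ (p-1) * Real.exp (-(a*y))) (p := -1) (by norm_num)
      _ = (1/a) ^ p * Real.Gamma p := Real.integral_rpow_mul_exp_neg_mul_Ioi hp ha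

/-- For a differentiable positive scale function `ω(t)`, the time
derivative of `f(x,t) = f_{ν,ω(t)}(x)` is integrable in `x` on `(0,∞)` with
`∫₀^∞ |∂f/∂t(x,t)| dx ≤ |ω'(t)| · 2ν/ω(t)`. -/
theorem invGammaPdf_time_derivative_L1_bound
    (ν : ℝ) (hν : 0 < ν) (ω : ℝ → ℝ) (hω : Differentiable ℝ ω)
    (hωpos : ∀ t, 0 < ω t) :
    ∀ t : ℝ,
      IntegrableOn (fun x => deriv (fun s => invGammaPdf ν (ω s) x) t) (Set.Ioi 0) ∧
      ∫ x in Set.Ioi (0:ℝ), |deriv (fun s => invGammaPdf ν (ω s) x) t|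
        ≤ |deriv ω t| * (2 * ν / ω t) := by
  intro t
  have hw : 0 < ω t := hωpos t
  have hΓ : 0 < Real.Gamma ν := Real.Gamma_pos_of_pos hν
  set w' : ℝ := deriv ω t with hw'def
  set c1 : ℝ := ν * (ω t) ^ (ν - 1) / Real.Gamma ν with hc1
  set c2 : ℝ := (ω t) ^ ν / Real.Gamma ν with hc2
  have hc1pos : 0 < c1 := by positivity
  have hc2pos : 0 < c2 := by positivity
  -- explicit derivative
  have hd : ∀ x ∈ Set.Ioi (0:ℝ),
      deriv (fun s => invGammaPdf ν (ω s) x) t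
      = w' * (c1 * (x ^ (-(ν+1)) * Real.exp (-(ω t)/x))
              - c2 * (x ^ (-(ν+2)) * Real.exp (-(ω t)/x))) := by
    intro x hx
    have hx0 : (0:ℝ) < x := hx
    have hω' : HasDerivAt ω w' t := (hω t).hasDerivAt
    have h1 : HasDerivAt (fun s => (ω s) ^ ν) (ν * (ω t) ^ (ν - 1) * w') t := by
      have := (Real.hasDerivAt_rpow_const (x := ω t) (p := ν) (Or.inl hw.ne')).comp t hω'
      exact this
    have hlin : HasDerivAt (fun s => -(ω s)/x) (-w'/x) t := (hω'.neg).div_const x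
    have h2 : HasDerivAt (fun s => Real.exp (-(ω s)/x))
        (Real.exp (-(ω t)/x) * (-w'/x)) t := (Real.hasDerivAt_exp _).comp t hlin
    have h3 : HasDerivAt (fun s => (ω s) ^ ν / Real.Gamma ν * x ^ (-(ν+1)))
        (ν * (ω t) ^ (ν - 1) * w' / Real.Gamma ν * x ^ (-(ν+1))) t :=
      (h1.div_const _).mul_const _
    have h4 := h3.mul h2
    have hfun : (fun s => invGammaPdf ν (ω s) x)
        = fun s => (ω s) ^ ν / Real.Gamma ν * x ^ (-(ν+1)) * Real.exp (-(ω s)/x) := by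
      funext s; simp [invGammaPdf, neg_div]
    rw [hfun, HasDerivAt.deriv (f := fun s => (ω s) ^ ν / Real.Gamma ν * x ^ (-(ν+1)) * Real.exp (-(ω s)/x)) h4]
    have hxx : x ^ (-(ν+2)) = x ^ (-(ν+1)) / x := by
      rw [div_eq_mul_inv, ← Real.rpow_neg_one x, ← Real.rpow_add hx0]
      congr 1; ring
    rw [hc1, hc2, hxx]
    field_simp
    ring
  obtain ⟨hIA, hvA⟩ := key_int hν hw
  obtain ⟨hIB, hvB⟩ := key_int (p := ν + 1) (by linarith) hw
  have hexp2 : (fun x : ℝ => x ^ (-(ν+1+1)) * Real.exp (-(ω t)/x))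
      = fun x : ℝ => x ^ (-(ν+2)) * Real.exp (-(ω t)/x) := by
    funext x; rw [show -(ν+1+1) = -(ν+2) by ring]
  rw [hexp2] at hIB hvB
  -- integrability of the explicit form
  have hIexp : IntegrableOn (fun x : ℝ =>
      w' * (c1 * (x ^ (-(ν+1)) * Real.exp (-(ω t)/x))
            - c2 * (x ^ (-(ν+2)) * Real.exp (-(ω t)/x)))) (Set.Ioi 0) :=
    (((hIA.const_mul c1).sub (hIB.const_mul c2)).const_mul w')
  have hI : IntegrableOn (fun x => deriv (fun s => invGammaPdf ν (ω s) x) t) (Set.Ioi 0) :=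
    hIexp.congr_fun (fun x hx => (hd x hx).symm) measurableSet_Ioi
  refine ⟨hI, ?_⟩
  -- bound
  have hbound : ∀ x ∈ Set.Ioi (0:ℝ),
      |deriv (fun s => invGammaPdf ν (ω s) x) t|
      ≤ |w'| * (c1 * (x ^ (-(ν+1)) * Real.exp (-(ω t)/x))
                + c2 * (x ^ (-(ν+2)) * Real.exp (-(ω t)/x))) := by
    intro x hx
    have hx0 : (0:ℝ) < x := hx
    rw [hd x hx, abs_mul]
    gcongr
    have h1 : 0 ≤ c1 * (x ^ (-(ν+1)) * Real.exp (-(ω t)/x)) := by positivity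
    have h2 : 0 ≤ c2 * (x ^ (-(ν+2)) * Real.exp (-(ω t)/x)) := by positivity
    calc |c1 * (x ^ (-(ν+1)) * Real.exp (-(ω t)/x))
            - c2 * (x ^ (-(ν+2)) * Real.exp (-(ω t)/x))|
        ≤ |c1 * (x ^ (-(ν+1)) * Real.exp (-(ω t)/x))|
          + |c2 * (x ^ (-(ν+2)) * Real.exp (-(ω t)/x))| := abs_sub _ _
      _ = _ := by rw [abs_of_nonneg h1, abs_of_nonneg h2]
  have hImaj : IntegrableOn (fun x : ℝ =>
      |w'| * (c1 * (x ^ (-(ν+1)) * Real.exp (-(ω t)/x))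
              + c2 * (x ^ (-(ν+2)) * Real.exp (-(ω t)/x)))) (Set.Ioi 0) :=
    (((hIA.const_mul c1).add (hIB.const_mul c2)).const_mul _)
  have hmono := setIntegral_mono_on hI.abs hImaj measurableSet_Ioi hbound
  refine hmono.trans ?_
  -- compute the majorant integral
  rw [integral_const_mul, integral_add (hIA.const_mul c1) (hIB.const_mul c2),
    integral_const_mul, integral_const_mul, hvA, hvB]
  have e1 : c1 * ((1 / ω t) ^ ν * Real.Gamma ν) = ν / ω t := by
    rw [hc1, one_div, Real.inv_rpow hw.le]
    rw [show ν - 1 = ν + (-1) by ring, Real.rpow_add hw, Real.rpow_neg_one]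
    field_simp
  have e2 : c2 * ((1 / ω t) ^ (ν+1) * Real.Gamma (ν+1)) = ν / ω t := by
    rw [hc2, one_div, Real.inv_rpow hw.le, Real.Gamma_add_one hν.ne',
      show ν + 1 = ν + 1 by rfl, Real.rpow_add hw, Real.rpow_one]
    field_simp
  rw [e1, e2]
  apply le_of_eq; ring
end

section
/- Let θ ∈ (0,1) and let z : [0,∞) → [0,∞) be differentiable and satisfy the differential inequality z'(t) ≤ −a(t) z(t) + b(t) z(t)^θ for all t ≥ 0, where a, b : [0,∞) → [0,∞) are continuous, a(t) → a^∞ as t → ∞ for some a^∞ > 0, and b(t) → 0 as t → ∞. Then z(t) → 0 as t → ∞. -/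
open Filter

/-- If a nonnegative differentiable function `z` satisfies
`z'(t) ≤ −a(t) z(t) + b(t) z(t)^θ` with `θ ∈ (0,1)`, `a, b` continuous and nonnegative,
`a(t) → a^∞ > 0` and `b(t) → 0`, then `z(t) → 0` as `t → ∞`. -/
theorem bernoulli_type_inequality_tendsto_zero
    (θ : ℝ) (hθ0 : 0 < θ) (hθ1 : θ < 1)
    (z a b : ℝ → ℝ)
    (hz_nonneg : ∀ t ≥ (0:ℝ), 0 ≤ z t)
    (hz_diff : ∀ t ≥ (0:ℝ), DifferentiableAt ℝ z t)
    (ha_cont : ContinuousOn a (Set.Ici 0))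
    (hb_cont : ContinuousOn b (Set.Ici 0))
    (ha_nonneg : ∀ t ≥ (0:ℝ), 0 ≤ a t)
    (hb_nonneg : ∀ t ≥ (0:ℝ), 0 ≤ b t)
    (ainf : ℝ) (hainf : 0 < ainf)
    (ha_lim : Tendsto a atTop (nhds ainf))
    (hb_lim : Tendsto b atTop (nhds 0))
    (hineq : ∀ t ≥ (0:ℝ), deriv z t ≤ -a t * z t + b t * z t ^ θ) :
    Tendsto z atTop (nhds 0) := by
  rw [Metric.tendsto_atTop]
  intro ε hε
  set α := ainf / 2 with hαdef
  have hαpos : 0 < α := by positivity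
  set M := ε / 2 with hMdef
  have hMpos : 0 < M := by positivity
  have hM1θ : 0 < M ^ (1 - θ) := Real.rpow_pos_of_pos hMpos _
  set δ := α * M ^ (1 - θ) / 2 with hδdef
  have hδpos : 0 < δ := by positivity
  -- T₀ from the limits
  have ha_ev : ∀ᶠ t in atTop, α ≤ a t := ha_lim.eventually_const_le (by linarith)
  have hb_ev : ∀ᶠ t in atTop, b t ≤ δ := hb_lim.eventually_le_const hδpos
  obtain ⟨T₀', hT₀'⟩ := (ha_ev.and hb_ev).exists_forall_of_atTop
  set T₀ := max T₀' 0 with hT₀def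
  have hT₀0 : (0:ℝ) ≤ T₀ := le_max_right _ _
  have hT₀ : ∀ t, T₀ ≤ t → α ≤ a t ∧ b t ≤ δ := fun t ht =>
    hT₀' t (le_trans (le_max_left _ _) ht)
  -- key derivative estimate
  have key : ∀ t, T₀ ≤ t → M ≤ z t → deriv z t ≤ -(α / 2) * M := by
    intro t ht hMz
    have ht0 : (0:ℝ) ≤ t := le_trans hT₀0 ht
    have hz0 : 0 < z t := lt_of_lt_of_le hMpos hMz
    have h1 : deriv z t ≤ -a t * z t + b t * z t ^ θ := hineq t ht0
    have hzθ : 0 < z t ^ θ := Real.rpow_pos_of_pos hz0 _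
    have h2 : b t * z t ^ θ ≤ δ * z t ^ θ :=
      mul_le_mul_of_nonneg_right (hT₀ t ht).2 hzθ.le
    have e1 : z t = z t ^ θ * z t ^ (1 - θ) := by
      rw [← Real.rpow_add hz0]
      norm_num
    have e2 : M ^ (1 - θ) ≤ z t ^ (1 - θ) :=
      Real.rpow_le_rpow hMpos.le hMz (by linarith)
    have h3 : δ * z t ^ θ ≤ α / 2 * z t := by
      rw [hδdef]
      calc α * M ^ (1 - θ) / 2 * z t ^ θ
          ≤ α * (z t ^ (1 - θ)) / 2 * z t ^ θ := by
            have := mul_le_mul_of_nonneg_right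
              (mul_le_mul_of_nonneg_left e2 hαpos.le) hzθ.le
            linarith
        _ = α / 2 * (z t ^ θ * z t ^ (1 - θ)) := by ring
        _ = α / 2 * z t := by rw [← e1]
    have h4 : -a t * z t ≤ -α * z t := by nlinarith [(hT₀ t ht).1]
    have h5 : deriv z t ≤ -α * z t + α / 2 * z t := by linarith
    have h6 : -α * z t + α / 2 * z t = -(α / 2) * z t := by ring
    rw [h6] at h5
    calc deriv z t ≤ -(α / 2) * z t := h5
      _ ≤ -(α / 2) * M := by nlinarith
  -- continuity of z on closed subintervals of [0, ∞)
  have hz_cont : ∀ s t : ℝ, 0 ≤ s → ContinuousOn z (Set.Icc s t) := by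
    intro s t hs x hx
    exact (hz_diff x (le_trans hs hx.1)).continuousAt.continuousWithinAt
  set c := α / 2 * M with hcdef
  have hcpos : 0 < c := by positivity
  -- step 2: there is t₁ ≥ T₀ with z t₁ < M
  have hstep2 : ∃ t₁, T₀ ≤ t₁ ∧ z t₁ < M := by
    by_contra h
    push_neg at h
    set T := T₀ + (z T₀ + 1) / c with hTdef
    have hzT₀ : 0 ≤ z T₀ := hz_nonneg T₀ hT₀0
    have hTT₀ : T₀ < T := by
      rw [hTdef]; nlinarith [div_pos (by linarith : (0:ℝ) < z T₀ + 1) hcpos]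
    have hanti : AntitoneOn (fun t => z t + c * t) (Set.Icc T₀ T) := by
      apply antitoneOn_of_deriv_nonpos (convex_Icc _ _)
      · exact (hz_cont T₀ T hT₀0).add (continuous_const.mul continuous_id).continuousOn
      · intro x hx
        rw [interior_Icc] at hx
        exact ((hz_diff x (le_trans hT₀0 hx.1.le)).add
          ((differentiable_id.const_mul c) x)).differentiableWithinAt
      · intro x hx
        rw [interior_Icc] at hx
        have hd : HasDerivAt (fun t => z t + c * t) (deriv z x + c * 1) x :=
          ((hz_diff x (le_trans hT₀0 hx.1.le)).hasDerivAt).add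
            ((hasDerivAt_id x).const_mul c)
        rw [hd.deriv]
        have := key x hx.1.le (h x hx.1.le)
        have hcM : -(α / 2) * M = -c := by rw [hcdef]; ring
        linarith [hcM ▸ this]
    have h2 := hanti (Set.left_mem_Icc.2 hTT₀.le) (Set.right_mem_Icc.2 hTT₀.le) hTT₀.le
    simp only at h2
    have hzT : 0 ≤ z T := hz_nonneg T (by linarith)
    have hcT : c * (T - T₀) = z T₀ + 1 := by
      rw [hTdef]; field_simp; ring
    nlinarith
  obtain ⟨t₁, ht₁T₀, ht₁M⟩ := hstep2
  have ht₁0 : (0:ℝ) ≤ t₁ := le_trans hT₀0 ht₁T₀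
  -- step 3: z stays ≤ M after t₁
  have hstep3 : ∀ T, t₁ ≤ T → z T ≤ M := by
    intro T hT
    by_contra hTM
    push_neg at hTM
    set S := Set.Icc t₁ T ∩ z ⁻¹' Set.Iic M with hSdef
    have hScl : IsClosed S :=
      (hz_cont t₁ T ht₁0).preimage_isClosed_of_isClosed isClosed_Icc isClosed_Iic
    have hSne : S.Nonempty := ⟨t₁, Set.left_mem_Icc.2 hT, ht₁M.le⟩
    have hSbdd : BddAbove S := ⟨T, fun x hx => hx.1.2⟩
    have hsS : sSup S ∈ S := hScl.csSup_mem hSne hSbdd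
    obtain ⟨s, hseq⟩ : ∃ s, s = sSup S := ⟨_, rfl⟩
    rw [← hseq] at hsS
    have hst₁ : t₁ ≤ s := hsS.1.1
    have hsT : s ≤ T := hsS.1.2
    have hzs : z s ≤ M := hsS.2
    have hsTlt : s < T := lt_of_le_of_ne hsT (by rintro rfl; exact absurd hzs (not_le.2 hTM))
    have hgt : ∀ x, s < x → x ≤ T → M < z x := by
      intro x hsx hxT
      by_contra hx
      push_neg at hx
      have : x ∈ S := ⟨⟨le_trans hst₁ hsx.le, hxT⟩, hx⟩
      exact absurd (hseq ▸ le_csSup hSbdd this) (not_le.2 hsx)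
    have hanti : AntitoneOn z (Set.Icc s T) := by
      apply antitoneOn_of_deriv_nonpos (convex_Icc _ _)
      · exact hz_cont s T (le_trans ht₁0 hst₁)
      · intro x hx
        rw [interior_Icc] at hx
        exact (hz_diff x (le_trans (le_trans ht₁0 hst₁) hx.1.le)).differentiableWithinAt
      · intro x hx
        rw [interior_Icc] at hx
        have hxT₀ : T₀ ≤ x := le_trans (le_trans ht₁T₀ hst₁) hx.1.le
        have := key x hxT₀ (hgt x hx.1 hx.2.le).le
        nlinarith
    have := hanti (Set.left_mem_Icc.2 hsTlt.le) (Set.right_mem_Icc.2 hsTlt.le) hsTlt.le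
    linarith
  refine ⟨t₁, fun t ht => ?_⟩
  have hzt : 0 ≤ z t := hz_nonneg t (le_trans ht₁0 ht)
  rw [Real.dist_eq, sub_zero, abs_of_nonneg hzt]
  have := hstep3 t ht
  rw [hMdef] at this
  linarith
end
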